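/- In particular (i = 0 case of the Goodman–Hartshorne lemma): Γ(U, O_U) ≅ colim_n H^0(V, O_V(nD)), where U = V − Supp(D); this is the direct limit, not the direct sum ⊕_n H^0(V, O_V(nD)). -/

import Mathlib

/-!
STATEMENT 14 (Goodman–Hartshorne, `i = 0` case):
`Γ(U, O_U) ≅ colim_n H⁰(V, O_V(nD))` where `U = V − Supp(D)`, `V` is a
Noetherian (integral) scheme and `D` an effective Cartier divisor with
canonical section `s`, the transition maps of the colimit being multiplication
by `s`.  (This is the direct limit, not the direct sum.)

Encoding: inside the function field `K(V)`, multiplication by the canonical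
section identifies `H⁰(V, O_V(nD))` with the set `divisorSections n` of
rational functions `f` such that `f·gᵢⁿ` is regular on `U i` for all local
equations `g i` of `D`; the transition maps become the inclusions
`divisorSections n ⊆ divisorSections (n+1)`, so the direct limit is the
increasing union `⋃ n, divisorSections n`, and `Γ(U, O_U)` is the set of
rational functions regular on `U = ⨆ i, D(g i)`.  The isomorphism is the
equality of these subsets of `K(V)`.
-/


open AlgebraicGeometry CategoryTheory Opposite TopologicalSpace

/-- The rational functions on an integral scheme `X` that are regular on a
nonempty open subset `U`, i.e. the image of `Γ(X, U)` in the function field. -/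
noncomputable def regularOn (X : AlgebraicGeometry.Scheme.{0}) [IsIntegral X]
    (U : X.Opens) (hU : Nonempty U) : Set X.functionField :=
  haveI := hU
  Set.range (X.germToFunctionField U)

/-- The image in the function field of a section over a nonempty open set. -/
noncomputable def genericGerm (X : AlgebraicGeometry.Scheme.{0}) [IsIntegral X]
    (U : X.Opens) (hU : Nonempty U) (s : Γ(X, U)) : X.functionField :=
  haveI := hU
  X.germToFunctionField U s

/-- Given an effective Cartier divisor `D` presented by local equations
`g i ∈ Γ(X, U i)` on an open cover `U`, this is
`H⁰(X, O_X(m·D)) = { f ∈ K(X) | ∀ i, f · gᵢᵐ is regular on U i }`. -/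
noncomputable def divisorSections (X : AlgebraicGeometry.Scheme.{0}) [IsIntegral X]
    {ι : Type} (U : ι → X.Opens) (hU : ∀ i, Nonempty (U i))
    (g : ∀ i, Γ(X, U i)) (m : ℕ) : Set X.functionField :=
  { f | ∀ i, f * (genericGerm X (U i) (hU i) (g i)) ^ m ∈ regularOn X (U i) (hU i) }

/-- The canonical map `ℂ → K(X)` induced by the structure morphism
`f : X → Spec ℂ`. -/
noncomputable def structureToFunctionField (X : AlgebraicGeometry.Scheme.{0})
    [IsIntegral X] (f : X ⟶ AlgebraicGeometry.Spec (CommRingCat.of ℂ)) :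
    ℂ →+* X.functionField :=
  haveI : Nonempty (⊤ : X.Opens) :=
    ⟨⟨(inferInstance : Nonempty X).some, trivial⟩⟩
  ((Scheme.ΓSpecIso (CommRingCat.of ℂ)).inv ≫ f.appTop ≫ X.germToFunctionField ⊤).hom

/-- The `ℂ`-algebra structure on `K(X)[t]` induced by the structure morphism. -/
noncomputable def polyAlgebra (X : AlgebraicGeometry.Scheme.{0}) [IsIntegral X]
    (str : ℂ →+* X.functionField) : Algebra ℂ (Polynomial X.functionField) :=
  (Polynomial.C.comp str).toAlgebra

/-- The section ring `R(X, D) = ⊕_{m ≥ 0} H⁰(X, O_X(mD))`, realized as the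
subalgebra of `K(X)[t]` generated by the elements `f·tᵐ` with
`f ∈ H⁰(X, O_X(mD))`. -/
noncomputable def sectionRing (X : AlgebraicGeometry.Scheme.{0}) [IsIntegral X]
    (str : ℂ →+* X.functionField) {ι : Type} (U : ι → X.Opens)
    (hU : ∀ i, Nonempty (U i)) (g : ∀ i, Γ(X, U i)) :
    @Subalgebra ℂ (Polynomial X.functionField) _ _ (polyAlgebra X str) :=
  @Algebra.adjoin ℂ (Polynomial X.functionField) _ _ (polyAlgebra X str)
    { p | ∃ (m : ℕ) (f : X.functionField),
        f ∈ divisorSections X U hU g m ∧ p = Polynomial.C f * Polynomial.X ^ m }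

/-- `κ(D, X) = d`: the section ring `R(X, D)` has transcendence degree `d + 1`
over ℂ, i.e. it admits a transcendence basis indexed by `Fin (d+1)`. -/
noncomputable def hasIitakaDimension (X : AlgebraicGeometry.Scheme.{0})
    [IsIntegral X] (f : X ⟶ AlgebraicGeometry.Spec (CommRingCat.of ℂ))
    {ι : Type} (U : ι → X.Opens) (hU : ∀ i, Nonempty (U i))
    (g : ∀ i, Γ(X, U i)) (d : ℕ) : Prop :=
  letI := polyAlgebra X (structureToFunctionField X f)
  ∃ x : Fin (d + 1) → (sectionRing X (structureToFunctionField X f) U hU g),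
    IsTranscendenceBasis ℂ x

namespace GH
variable (X : AlgebraicGeometry.Scheme.{0}) [IsIntegral X]

lemma gp_mem (U : X.Opens) (hU : Nonempty U) : genericPoint X ∈ U :=
  ((genericPoint_spec X).mem_open_set_iff U.isOpen).mpr (by simpa using hU)

lemma genericGerm_eq (U : X.Opens) (hU : Nonempty U) (s : Γ(X, U)) :
    genericGerm X U hU s = X.presheaf.germ U (genericPoint X) (gp_mem X U hU) s := rfl

lemma mul_mem {U : X.Opens} (hU : Nonempty U) {f g : X.functionField}
    (hf : f ∈ regularOn X U hU) (hg : g ∈ regularOn X U hU) : f * g ∈ regularOn X U hU := by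
  obtain ⟨s, rfl⟩ := hf; obtain ⟨t, rfl⟩ := hg
  exact ⟨s * t, map_mul _ _ _⟩

lemma pow_mem {U : X.Opens} (hU : Nonempty U) {f : X.functionField}
    (hf : f ∈ regularOn X U hU) (n : ℕ) : f ^ n ∈ regularOn X U hU := by
  induction n with
  | zero => exact ⟨1, by simp⟩
  | succ n ih => rw [pow_succ]; exact mul_mem X hU ih hf

lemma regularOn_mono {U W : X.Opens} (hU : Nonempty U) (hW : Nonempty W) (hle : W ≤ U)
    {f : X.functionField} (hf : f ∈ regularOn X U hU) : f ∈ regularOn X W hW := by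
  obtain ⟨s, rfl⟩ := hf
  exact ⟨X.presheaf.map (homOfLE hle).op s, X.presheaf.germ_res_apply _ _ _ s⟩

lemma sections_subsingleton {W : X.Opens} (h : ¬ Nonempty W) (s t : Γ(X, W)) : s = t := by
  have hW : W = ⊥ := by
    rw [eq_bot_iff]; intro x hx; exact (h ⟨⟨x, hx⟩⟩).elim
  subst hW
  exact Subsingleton.elim s t

lemma glue {ι : Type} (W : ι → X.Opens) (U₀ : X.Opens) (hne : Nonempty U₀)
    (hle : U₀ ≤ ⨆ i, W i) (hWle : ∀ i, W i ≤ U₀) (f : X.functionField)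
    (h : ∀ i, ∀ hne' : Nonempty (W i), f ∈ regularOn X (W i) hne') :
    f ∈ regularOn X U₀ hne := by
  classical
  let sf : ∀ i, Γ(X, W i) := fun i =>
    if h' : Nonempty (W i) then (h i h').choose else 0
  have hsf : ∀ i (h' : Nonempty (W i)),
      X.presheaf.germ (W i) (genericPoint X) (gp_mem X _ h') (sf i) = f := by
    intro i h'
    show X.presheaf.germ (W i) (genericPoint X) (gp_mem X _ h')
      (if h' : Nonempty (W i) then (h i h').choose else 0) = f
    rw [dif_pos h']
    exact (h i h').choose_spec
  have hcomp : TopCat.Presheaf.IsCompatible X.sheaf.1 W sf := by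
    intro i j
    by_cases hij : Nonempty ((W i ⊓ W j : X.Opens))
    · haveI : Nonempty (W i) := hij.map fun x => ⟨x.1, x.2.1⟩
      haveI : Nonempty (W j) := hij.map fun x => ⟨x.1, x.2.2⟩
      apply germ_injective_of_isIntegral X (genericPoint X) (gp_mem X _ hij)
      show X.presheaf.germ _ _ _ (X.presheaf.map _ (sf i)) =
        X.presheaf.germ _ _ _ (X.presheaf.map _ (sf j))
      rw [X.presheaf.germ_res_apply, X.presheaf.germ_res_apply, hsf i ‹_›, hsf j ‹_›]
    · exact sections_subsingleton X hij _ _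
  obtain ⟨t, ht, -⟩ := X.sheaf.existsUnique_gluing' W U₀ (fun i => homOfLE (hWle i)) hle sf hcomp
  obtain ⟨i, hi⟩ := Opens.mem_iSup.mp (hle (gp_mem X U₀ hne))
  haveI : Nonempty (W i) := ⟨⟨_, hi⟩⟩
  refine ⟨t, ?_⟩
  show X.presheaf.germ U₀ (genericPoint X) (gp_mem X U₀ hne) t = f
  rw [← hsf i ‹_›, ← ht i]
  exact (X.presheaf.germ_res_apply (homOfLE (hWle i)) _ (gp_mem X _ ‹_›) t).symm

lemma local_step {U₀ Ui W : X.Opens} (hUi : Nonempty Ui) (hW : Nonempty W)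
    (hWaff : IsAffineOpen W) (hWle : W ≤ Ui) (gi : Γ(X, Ui))
    (hgi : X.presheaf.germ Ui (genericPoint X) (gp_mem X Ui hUi) gi ≠ 0)
    (hbole : X.basicOpen gi ≤ U₀) (hU₀ne : Nonempty U₀) (f : X.functionField)
    (hf : f ∈ regularOn X U₀ hU₀ne) :
    ∃ n, f * (X.presheaf.germ Ui (genericPoint X) (gp_mem X Ui hUi) gi) ^ n
      ∈ regularOn X W hW := by
  set G := X.presheaf.germ Ui (genericPoint X) (gp_mem X Ui hUi) gi with hG
  set g' : Γ(X, W) := X.presheaf.map (homOfLE hWle).op gi with hg'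
  have hgerm : X.presheaf.germ W (genericPoint X) (gp_mem X W hW) g' = G :=
    X.presheaf.germ_res_apply _ _ _ gi
  have hg'ne : g' ≠ 0 := by
    intro h0
    rw [h0, map_zero] at hgerm
    exact hgi hgerm.symm
  set B := X.basicOpen g' with hB
  have hBeq : B = W ⊓ X.basicOpen gi := X.basicOpen_res gi (homOfLE hWle).op
  have hBne : Nonempty B := by
    by_contra h
    apply hg'ne
    have hbot : B = ⊥ := by
      rw [eq_bot_iff]; intro x hx; exact (h ⟨⟨x, hx⟩⟩).elim
    exact (AlgebraicGeometry.basicOpen_eq_bot_iff g').mp hbot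
  have hBle₀ : B ≤ U₀ := hBeq.le.trans (le_trans inf_le_right hbole)
  obtain ⟨t, ht⟩ := regularOn_mono X hU₀ne hBne hBle₀ hf
  haveI := hWaff.isLocalization_basicOpen g'
  obtain ⟨⟨a, s⟩, hs⟩ := IsLocalization.surj (Submonoid.powers g') t
  obtain ⟨n, hn⟩ := s.2
  refine ⟨n, a, ?_⟩
  have halg : ∀ b : Γ(X, W), (algebraMap Γ(X, W) Γ(X, B)) b =
      X.presheaf.map (homOfLE (X.basicOpen_le g')).op b := fun _ => rfl
  have := congrArg (X.presheaf.germ B (genericPoint X) (gp_mem X B hBne)) hs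
  rw [map_mul, halg, halg, X.presheaf.germ_res_apply, X.presheaf.germ_res_apply] at this
  change _ = X.presheaf.germ W (genericPoint X) _ a at this
  rw [show X.germToFunctionField B t = f from ht] at this
  have hsn : (s : Γ(X, W)) = g' ^ n := hn.symm
  rw [← this, hsn, map_pow, hgerm]

lemma mono_step {W : X.Opens} (hW : Nonempty W) {f G : X.functionField}
    (hG : G ∈ regularOn X W hW) {n m : ℕ} (hnm : n ≤ m)
    (hf : f * G ^ n ∈ regularOn X W hW) : f * G ^ m ∈ regularOn X W hW := by
  have : f * G ^ m = (f * G ^ n) * G ^ (m - n) := by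
    rw [mul_assoc, ← pow_add, Nat.add_sub_cancel' hnm]
  rw [this]
  exact mul_mem X hW hf (pow_mem X hW hG _)

lemma exists_pow_regular [TopologicalSpace.NoetherianSpace X] {Ui U₀ : X.Opens}
    (hUi : Nonempty Ui) (hU₀ne : Nonempty U₀) (gi : Γ(X, Ui))
    (hgi : X.presheaf.germ Ui (genericPoint X) (gp_mem X Ui hUi) gi ≠ 0)
    (hbole : X.basicOpen gi ≤ U₀) (f : X.functionField) (hf : f ∈ regularOn X U₀ hU₀ne) :
    ∃ n, f * (X.presheaf.germ Ui (genericPoint X) (gp_mem X Ui hUi) gi) ^ n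
      ∈ regularOn X Ui hUi := by
  have loc : ∀ x : Ui, ∃ (W : X.Opens) (hW : Nonempty W), IsAffineOpen W ∧ (x : X) ∈ W ∧
      W ≤ Ui ∧ ∃ n, f * (X.presheaf.germ Ui (genericPoint X) (gp_mem X Ui hUi) gi) ^ n
        ∈ regularOn X W hW := by
    intro x
    obtain ⟨_, ⟨W, hWaff, rfl⟩, hxW, hWle⟩ :=
      X.isBasis_affineOpens.exists_subset_of_mem_open x.2 Ui.isOpen
    have hWne : Nonempty W := ⟨⟨x, hxW⟩⟩
    exact ⟨W, hWne, hWaff, hxW, hWle, local_step X hUi hWne hWaff hWle gi hgi hbole hU₀ne f hf⟩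
  choose W hWne hWaff hxW hWle n hn using loc
  obtain ⟨t, ht⟩ := (TopologicalSpace.NoetherianSpace.isCompact (Ui : Set X)).elim_finite_subcover
      (fun x : Ui => (W x : Set X)) (fun x => (W x).isOpen)
      (fun y hy => Set.mem_iUnion.mpr ⟨⟨y, hy⟩, hxW ⟨y, hy⟩⟩)
  refine ⟨t.sup n, glue X (fun x : t => W x) Ui hUi ?_ (fun x => hWle x) _ ?_⟩
  · intro y hy
    obtain ⟨x, hxt, hyW⟩ := Set.mem_iUnion₂.mp (ht hy)
    exact Opens.mem_iSup.mpr ⟨⟨x, hxt⟩, hyW⟩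
  · intro x hne'
    refine mono_step X _ ?_ (Finset.le_sup x.2) (hn x)
    exact ⟨X.presheaf.map (homOfLE (hWle x)).op gi, X.presheaf.germ_res_apply _ _ _ gi⟩

end GH


theorem goodman_hartshorne_global_sections_colimit
    (V : AlgebraicGeometry.Scheme.{0}) [IsIntegral V]
    [AlgebraicGeometry.IsNoetherian V]
    {ι : Type} (U : ι → V.Opens) (hU : ∀ i, Nonempty (U i))
    (hcov : ∀ x : V, ∃ i, x ∈ U i)
    (g : ∀ i, Γ(V, U i))
    (hg : ∀ i, genericGerm V (U i) (hU i) (g i) ≠ 0)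
    (hcompat : ∀ i j (h : Nonempty ((U i ⊓ U j : V.Opens))),
      genericGerm V (U i) (hU i) (g i) / genericGerm V (U j) (hU j) (g j) ∈
        regularOn V (U i ⊓ U j) h ∧
      genericGerm V (U j) (hU j) (g j) / genericGerm V (U i) (hU i) (g i) ∈
        regularOn V (U i ⊓ U j) h)
    (U₀ : V.Opens) (hU₀ : U₀ = ⨆ i, V.basicOpen (g i))
    (hU₀ne : Nonempty U₀) :
    (⋃ m : ℕ, divisorSections V U hU g m) = regularOn V U₀ hU₀ne := by
  set G : ι → V.functionField := fun i => genericGerm V (U i) (hU i) (g i) with hGdef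
  have hble : ∀ i, V.basicOpen (g i) ≤ U₀ := fun i => hU₀ ▸ le_iSup (fun i => V.basicOpen (g i)) i
  ext f
  simp only [Set.mem_iUnion]
  constructor
  · rintro ⟨m, hf⟩
    apply GH.glue V (fun i => V.basicOpen (g i)) U₀ hU₀ne (hU₀ ▸ le_rfl) hble f
    intro i hne'
    obtain ⟨s, hs⟩ := hf i
    have hu := RingedSpace.isUnit_res_basicOpen V.toRingedSpace (g i)
    let u : Γ(V, V.basicOpen (g i))ˣ := hu.unit
    set e := V.presheaf.germ (V.basicOpen (g i)) (genericPoint V)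
      (GH.gp_mem V (V.basicOpen (g i)) hne') with hedef
    have hval : (u : Γ(V, V.basicOpen (g i))) =
        V.presheaf.map (homOfLE (V.basicOpen_le (g i))).op (g i) := hu.unit_spec
    have hgerm : e ((u : Γ(V, V.basicOpen (g i)))) = G i := by
      rw [hval]
      exact V.presheaf.germ_res_apply _ _ _ (g i)
    have huinv : e ((u⁻¹ : Γ(V, V.basicOpen (g i))ˣ) : Γ(V, V.basicOpen (g i))) * G i = 1 := by
      rw [← hgerm, ← map_mul]
      simp
    have hGine : G i ≠ 0 := hg i
    have hGiinv : e ((u⁻¹ : Γ(V, V.basicOpen (g i))ˣ) : Γ(V, V.basicOpen (g i))) = (G i)⁻¹ :=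
      eq_inv_of_mul_eq_one_left huinv
    refine ⟨V.presheaf.map (homOfLE (V.basicOpen_le (g i))).op s *
      ((u⁻¹ : Γ(V, V.basicOpen (g i))ˣ) : Γ(V, V.basicOpen (g i))) ^ m, ?_⟩
    show e _ = f
    rw [map_mul, map_pow, hGiinv]
    have : e (V.presheaf.map (homOfLE (V.basicOpen_le (g i))).op s) = f * G i ^ m := by
      rw [hedef, V.presheaf.germ_res_apply]
      exact hs
    rw [this]
    field_simp
    rw [one_div, mul_assoc, ← mul_pow, mul_inv_cancel₀ hGine, one_pow, mul_one]
  · intro hf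
    have key : ∀ i, ∃ n, f * G i ^ n ∈ regularOn V (U i) (hU i) := fun i =>
      GH.exists_pow_regular V (hU i) hU₀ne (g i) (hg i) (hble i) f hf
    choose n hn using key
    obtain ⟨s, hs⟩ := (TopologicalSpace.NoetherianSpace.isCompact
        (Set.univ : Set V)).elim_finite_subcover (fun i => (U i : Set V))
        (fun i => (U i).isOpen) (fun x _ => Set.mem_iUnion.mpr (hcov x))
    refine ⟨s.sup n, fun j => ?_⟩
    apply GH.glue V (fun i : s => (U i ⊓ U j : V.Opens)) (U j) (hU j) ?_
      (fun i => inf_le_right) _ ?_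
    · intro y hy
      obtain ⟨i, hit, hyi⟩ := Set.mem_iUnion₂.mp (hs (Set.mem_univ y))
      exact Opens.mem_iSup.mpr ⟨⟨i, hit⟩, hyi, hy⟩
    · intro i hne'
      have hGi : G i ∈ regularOn V (U i) (hU i) := ⟨g i, rfl⟩
      have h1 : f * G i ^ (s.sup n) ∈ regularOn V (U i) (hU i) :=
        GH.mono_step V _ hGi (Finset.le_sup i.2) (hn i)
      have h2 := (hcompat i j hne').2
      have hGine : G i ≠ 0 := hg i
      have heq : f * G j ^ (s.sup n) = (f * G i ^ (s.sup n)) * (G j / G i) ^ (s.sup n) := by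
        field_simp
        rw [mul_assoc, ← mul_pow, show G i * (G j / G i) = G j from by field_simp]
      rw [heq]
      refine GH.mul_mem V hne' ?_ (GH.pow_mem V hne' h2 _)
      exact GH.regularOn_mono V (hU i) hne' inf_le_left h1
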